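/- For an integer m and a nonnegative integer k, the function (r,θ) ↦ r^k e^{imθ} (viewed as a function of (x,y) = (r cos θ, r sin θ) on ℝ²∖{0}) extends to a polynomial function that is homogeneous of degree k if and only if k − |m| is even and nonnegative. -/

import Mathlib

open MvPolynomial Polynomial Complex

noncomputable def fsub : Fin 2 → Polynomial ℂ :=
  ![Polynomial.C (2⁻¹ : ℂ) * (Polynomial.X ^ 2 + 1),
    Polynomial.C ((2 * Complex.I)⁻¹) * (Polynomial.X ^ 2 - 1)]

lemma fsub_natDegree_le (i : Fin 2) : (fsub i).natDegree ≤ 2 := by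
  fin_cases i
  · show (Polynomial.C (2⁻¹ : ℂ) * (Polynomial.X ^ 2 + 1)).natDegree ≤ 2
    compute_degree
  · show (Polynomial.C ((2 * Complex.I)⁻¹) * (Polynomial.X ^ 2 - 1)).natDegree ≤ 2
    compute_degree

lemma deg_of_mem_support {k : ℕ} {P : MvPolynomial (Fin 2) ℂ}
    (hP : P.IsHomogeneous k) {d : Fin 2 →₀ ℕ} (hd : d ∈ P.support) :
    ∑ i, d i = k := by
  have h1 := hP (MvPolynomial.mem_support_iff.mp hd)
  rw [← h1, Finsupp.weight_apply, Finsupp.sum_fintype] <;> simp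

lemma eval_smul_of_isHomogeneous {k : ℕ} {P : MvPolynomial (Fin 2) ℂ}
    (hP : P.IsHomogeneous k) (c : ℂ) (v : Fin 2 → ℂ) :
    MvPolynomial.eval (fun i => c * v i) P = c ^ k * MvPolynomial.eval v P := by
  rw [MvPolynomial.eval_eq', MvPolynomial.eval_eq', Finset.mul_sum]
  refine Finset.sum_congr rfl fun d hd => ?_
  have hdeg := deg_of_mem_support hP hd
  calc P.coeff d * ∏ i, (c * v i) ^ d i
      = P.coeff d * ((∏ i, c ^ d i) * ∏ i, v i ^ d i) := by
        rw [← Finset.prod_mul_distrib]; congr 1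
        exact Finset.prod_congr rfl fun i _ => mul_pow _ _ _
    _ = c ^ k * (P.coeff d * ∏ i, v i ^ d i) := by
        rw [Finset.prod_pow_eq_pow_sum, hdeg]; ring

lemma natDegree_Q_le {k : ℕ} {P : MvPolynomial (Fin 2) ℂ} (hP : P.IsHomogeneous k) :
    (MvPolynomial.eval₂ Polynomial.C fsub P).natDegree ≤ 2 * k := by
  rw [MvPolynomial.eval₂_eq']
  apply Polynomial.natDegree_sum_le_of_forall_le
  intro d hd
  refine (Polynomial.natDegree_C_mul_le _ _).trans ?_
  refine (Polynomial.natDegree_prod_le _ _).trans ?_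
  calc ∑ i, ((fsub i) ^ d i).natDegree ≤ ∑ i, d i * 2 := by
        apply Finset.sum_le_sum
        intro i _
        exact (Polynomial.natDegree_pow_le).trans (Nat.mul_le_mul_left _ (fsub_natDegree_le i))
    _ = 2 * k := by rw [← Finset.sum_mul, deg_of_mem_support hP hd]; ring

lemma eval_eval₂_fsub (P : MvPolynomial (Fin 2) ℂ) (z : ℂ) :
    Polynomial.eval z (MvPolynomial.eval₂ Polynomial.C fsub P)
      = MvPolynomial.eval (fun i => (fsub i).eval z) P := by
  have h := MvPolynomial.eval₂_comp_left (Polynomial.evalRingHom z) Polynomial.C fsub P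
  simp only [Polynomial.coe_evalRingHom] at h
  rw [h]
  have : (Polynomial.evalRingHom z).comp Polynomial.C = RingHom.id ℂ := by
    ext x; simp
  rw [this]
  rfl

lemma fsub_eval0 (θ : ℝ) :
    (fsub 0).eval (Complex.exp (θ * Complex.I))
      = Complex.exp (θ * Complex.I) * (Real.cos θ : ℂ) := by
  have hab : Complex.exp (θ * Complex.I) * Complex.exp (-θ * Complex.I) = 1 := by
    rw [← Complex.exp_add]; ring_nf; exact Complex.exp_zero
  simp only [fsub, Matrix.cons_val_zero, Polynomial.eval_mul, Polynomial.eval_C,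
    Polynomial.eval_add, Polynomial.eval_pow, Polynomial.eval_X, Polynomial.eval_one]
  rw [Complex.ofReal_cos, Complex.cos, ← Complex.ofReal_neg]
  push_cast
  rw [← hab]
  ring

lemma fsub_eval1 (θ : ℝ) :
    (fsub 1).eval (Complex.exp (θ * Complex.I))
      = Complex.exp (θ * Complex.I) * (Real.sin θ : ℂ) := by
  have hab : Complex.exp (θ * Complex.I) * Complex.exp (-θ * Complex.I) = 1 := by
    rw [← Complex.exp_add]; ring_nf; exact Complex.exp_zero
  simp only [fsub, Matrix.cons_val_one, Matrix.head_cons, Polynomial.eval_mul, Polynomial.eval_C,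
    Polynomial.eval_sub, Polynomial.eval_pow, Polynomial.eval_X, Polynomial.eval_one]
  rw [Complex.ofReal_sin, Complex.sin, ← Complex.ofReal_neg]
  push_cast
  simp only [Polynomial.eval_mul, Polynomial.eval_C, Polynomial.eval_sub, Polynomial.eval_pow,
    Polynomial.eval_X, Polynomial.eval_one]
  rw [← hab]
  have hI : Complex.I ≠ 0 := Complex.I_ne_zero
  field_simp
  ring_nf
  rw [Complex.I_sq]
  ring

lemma zero_of_vanish_circle (R : Polynomial ℂ)
    (h : ∀ θ : ℝ, R.eval (Complex.exp (θ * Complex.I)) = 0) : R = 0 := by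
  apply Polynomial.eq_zero_of_infinite_isRoot
  have hinj : Set.InjOn (fun θ : ℝ => Complex.exp (θ * Complex.I)) (Set.Ioo 0 1) := by
    intro a ha b hb hab
    simp only [Set.mem_Ioo] at ha hb
    rw [Complex.exp_eq_exp_iff_exists_int] at hab
    obtain ⟨n, hn⟩ := hab
    have hc : (a : ℂ) * Complex.I = ((b : ℝ) + (n : ℝ) * (2 * Real.pi)) * Complex.I := by
      push_cast at hn ⊢; linear_combination hn
    have hre : a = b + (n : ℝ) * (2 * Real.pi) :=
      by exact_mod_cast mul_right_cancel₀ Complex.I_ne_zero hc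
    have hpi := Real.pi_gt_three
    have hn0 : n = 0 := by
      by_contra hne
      have h1 : (1:ℝ) ≤ |(n:ℝ)| := by exact_mod_cast Int.one_le_abs hne
      have h2 : |a - b| < 1 := by
        rw [abs_lt]; constructor <;> [linarith [ha.1, hb.2]; linarith [ha.2, hb.1]]
      have h3 : |(n:ℝ) * (2 * Real.pi)| = |(n:ℝ)| * (2 * Real.pi) := by
        rw [abs_mul, abs_of_pos (show (0:ℝ) < 2 * Real.pi by positivity)]
      have h4 : a - b = (n:ℝ) * (2 * Real.pi) := by linarith
      rw [h4, h3] at h2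
      nlinarith
    simp [hn0] at hre; linarith
  have himg : ((fun θ : ℝ => Complex.exp (θ * Complex.I)) '' Set.Ioo 0 1).Infinite :=
    Set.Infinite.image hinj (Set.Ioo_infinite (by norm_num))
  apply himg.mono
  rintro x ⟨θ, -, rfl⟩
  exact h θ

/-- For `m : ℤ` and `k : ℕ`, the function `(r,θ) ↦ r^k e^{imθ}` of
`(x,y) = (r cos θ, r sin θ)` on `ℝ² ∖ {0}` extends to a homogeneous polynomial
function of degree `k` if and only if `k − |m|` is even and nonnegative. -/
theorem stmt_5 (m : ℤ) (k : ℕ) :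
    (∃ P : MvPolynomial (Fin 2) ℂ, P.IsHomogeneous k ∧
      ∀ r θ : ℝ, 0 < r →
        MvPolynomial.eval
            (![((r * Real.cos θ : ℝ) : ℂ), ((r * Real.sin θ : ℝ) : ℂ)]) P
          = (r : ℂ) ^ k * Complex.exp ((m : ℂ) * θ * Complex.I))
    ↔ (|m| ≤ (k : ℤ) ∧ Even ((k : ℤ) - |m|)) := by
  constructor
  · rintro ⟨P, hP, hPe⟩
    have hunit : ∀ θ : ℝ, MvPolynomial.eval ![((Real.cos θ : ℝ) : ℂ), ((Real.sin θ : ℝ) : ℂ)] P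
        = Complex.exp ((m : ℂ) * θ * Complex.I) := by
      intro θ
      have := hPe 1 θ one_pos
      simpa using this
    set Q := MvPolynomial.eval₂ Polynomial.C fsub P with hQdef
    have hQ : ∀ θ : ℝ, Q.eval (Complex.exp (θ * Complex.I))
        = Complex.exp ((((k : ℤ) + m : ℤ) : ℂ) * θ * Complex.I) := by
      intro θ
      rw [hQdef, eval_eval₂_fsub]
      have hfun : (fun i => (fsub i).eval (Complex.exp (θ * Complex.I)))
          = fun i => Complex.exp (θ * Complex.I) *
              (![((Real.cos θ : ℝ) : ℂ), ((Real.sin θ : ℝ) : ℂ)]) i := by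
        funext i; fin_cases i
        · exact fsub_eval0 θ
        · exact fsub_eval1 θ
      rw [hfun, eval_smul_of_isHomogeneous hP, hunit θ, ← Complex.exp_nat_mul, ← Complex.exp_add]
      congr 1
      push_cast
      ring
    have hge : 0 ≤ (k : ℤ) + m := by
      by_contra hlt
      push_neg at hlt
      set N := (-((k : ℤ) + m)).toNat with hN
      have hNpos : 0 < N := by omega
      have hNc : (N : ℤ) = -((k : ℤ) + m) := by omega
      have h0 : (Polynomial.X ^ N * Q - 1 : Polynomial ℂ) = 0 := by
        apply zero_of_vanish_circle
        intro θ
        simp only [Polynomial.eval_sub, Polynomial.eval_mul, Polynomial.eval_pow,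
          Polynomial.eval_X, Polynomial.eval_one, hQ θ]
        rw [← Complex.exp_nat_mul, ← Complex.exp_add]
        have hcast : ((N : ℤ) : ℂ) + (((k : ℤ) + m : ℤ) : ℂ) = 0 := by
          exact_mod_cast congrArg (Int.cast : ℤ → ℂ) (by omega : (N : ℤ) + ((k : ℤ) + m) = 0)
        have hexp0 : (N : ℂ) * (θ * Complex.I) + (((k : ℤ) + m : ℤ) : ℂ) * θ * Complex.I = 0 := by
          push_cast at hcast ⊢
          linear_combination (θ : ℂ) * Complex.I * hcast
        rw [hexp0, Complex.exp_zero]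
        ring
      have := congrArg (Polynomial.eval 0) h0
      simp [zero_pow hNpos.ne'] at this
    set n := ((k : ℤ) + m).toNat with hn
    have hnc : (n : ℤ) = (k : ℤ) + m := Int.toNat_of_nonneg hge
    have hQX : Q = Polynomial.X ^ n := by
      have h0 : (Q - Polynomial.X ^ n) = 0 := by
        apply zero_of_vanish_circle
        intro θ
        simp only [Polynomial.eval_sub, Polynomial.eval_pow, Polynomial.eval_X, hQ θ]
        rw [← Complex.exp_nat_mul]
        have hcast : ((n : ℕ) : ℂ) = ((k : ℕ) : ℂ) + (m : ℂ) := by exact_mod_cast hnc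
        rw [sub_eq_zero]
        congr 1
        push_cast at hcast ⊢
        linear_combination (-(θ : ℂ)) * Complex.I * hcast
      exact sub_eq_zero.mp h0
    have hdegQ : n ≤ 2 * k := by
      have h := natDegree_Q_le hP
      rw [← hQdef, hQX, Polynomial.natDegree_X_pow] at h
      exact h
    -- parity
    have h1 : MvPolynomial.eval ![(1 : ℂ), 0] P = 1 := by
      have := hunit 0
      simpa using this
    have hpi : MvPolynomial.eval ![(-1 : ℂ), 0] P = Complex.exp ((m : ℂ) * Real.pi * Complex.I) := by
      have := hunit Real.pi
      simpa using this
    have hfun2 : (fun i => (-1 : ℂ) * (![(1 : ℂ), 0]) i) = ![(-1 : ℂ), 0] := by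
      funext i; fin_cases i <;> simp
    have hhom := eval_smul_of_isHomogeneous hP (-1) ![(1 : ℂ), 0]
    rw [hfun2, h1, mul_one, hpi] at hhom
    have hexpm : Complex.exp ((m : ℂ) * Real.pi * Complex.I) = (-1 : ℂ) ^ m := by
      rw [show ((m : ℂ) * Real.pi * Complex.I) = (m : ℂ) * (Real.pi * Complex.I) by ring,
        Complex.exp_int_mul, Complex.exp_pi_mul_I]
    rw [hexpm] at hhom
    have key : ((-1 : ℂ)) ^ ((k : ℤ) - m) = 1 := by
      rw [zpow_sub₀ (by norm_num : (-1 : ℂ) ≠ 0), hhom, zpow_natCast]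
      exact div_self (pow_ne_zero _ (by norm_num))
    have heven : Even ((k : ℤ) - m) := by
      by_contra hodd
      rw [Int.not_even_iff_odd] at hodd
      rw [Odd.neg_one_zpow hodd] at key
      norm_num at key
    constructor
    · rw [abs_le]; omega
    · obtain ⟨t, ht⟩ := heven
      rcases abs_cases m with ⟨hcm, _⟩ | ⟨hcm, _⟩ <;> rw [hcm]
      · exact ⟨t, ht⟩
      · exact ⟨t + m, by omega⟩
  · rintro ⟨hle, heven⟩
    set nn := m.natAbs with hnn
    have hnnc : (nn : ℤ) = |m| := (Int.abs_eq_natAbs m).symm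
    have hnk : nn ≤ k := by omega
    obtain ⟨t, ht⟩ := heven
    have ht' : 0 ≤ t := by omega
    set j := t.toNat with hj
    have hjk : 2 * j + nn = k := by omega
    set ε : ℂ := if 0 ≤ m then Complex.I else -Complex.I with hε
    refine ⟨(MvPolynomial.X 0 ^ 2 + MvPolynomial.X 1 ^ 2) ^ j *
      (MvPolynomial.X 0 + MvPolynomial.C ε * MvPolynomial.X 1) ^ nn, ?_, ?_⟩
    · have h2 : ((MvPolynomial.X 0 ^ 2 + MvPolynomial.X 1 ^ 2 : MvPolynomial (Fin 2) ℂ)).IsHomogeneous 2 := by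
        have := ((MvPolynomial.isHomogeneous_X ℂ (0 : Fin 2)).pow 2).add
          ((MvPolynomial.isHomogeneous_X ℂ (1 : Fin 2)).pow 2)
        simpa using this
      have hl : ((MvPolynomial.X 0 + MvPolynomial.C ε * MvPolynomial.X 1 :
          MvPolynomial (Fin 2) ℂ)).IsHomogeneous 1 :=
        (MvPolynomial.isHomogeneous_X ℂ (0 : Fin 2)).add
          ((MvPolynomial.isHomogeneous_X ℂ (1 : Fin 2)).C_mul ε)
      have := (h2.pow j).mul (hl.pow nn)
      have hk : 2 * j + 1 * nn = k := by omega
      rw [hk] at this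
      exact this
    · intro r θ hr
      simp only [map_mul, map_pow, map_add, MvPolynomial.eval_X, MvPolynomial.eval_C,
        Matrix.cons_val_zero, Matrix.cons_val_one, Matrix.head_cons]
      have hsq : (((r * Real.cos θ : ℝ) : ℂ)) ^ 2 + (((r * Real.sin θ : ℝ) : ℂ)) ^ 2
          = ((r : ℂ)) ^ 2 := by
        push_cast
        have h1 : Complex.sin (θ : ℂ) ^ 2 + Complex.cos (θ : ℂ) ^ 2 = 1 :=
          Complex.sin_sq_add_cos_sq _
        linear_combination ((r : ℂ))^2 * h1
      rw [hsq]
      rcases le_or_gt 0 m with hm | hm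
      · have hmn : m = (nn : ℤ) := by omega
        have hlin : (((r * Real.cos θ : ℝ) : ℂ)) + ε * (((r * Real.sin θ : ℝ) : ℂ))
            = (r : ℂ) * Complex.exp (θ * Complex.I) := by
          rw [hε, if_pos hm, Complex.exp_mul_I]
          push_cast
          ring
        rw [hlin, mul_pow, ← Complex.exp_nat_mul]
        rw [show ((m : ℂ) * θ * Complex.I) = (nn : ℂ) * (θ * Complex.I) by
          rw [hmn]; push_cast; ring]
        rw [← pow_mul, show ((r : ℂ)) ^ k = (r : ℂ) ^ (2 * j) * (r : ℂ) ^ nn by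
          rw [← pow_add, hjk]]
        ring
      · have hmn : m = -(nn : ℤ) := by omega
        have hlin : (((r * Real.cos θ : ℝ) : ℂ)) + ε * (((r * Real.sin θ : ℝ) : ℂ))
            = (r : ℂ) * Complex.exp (-θ * Complex.I) := by
          rw [hε, if_neg (by omega), Complex.exp_mul_I]
          push_cast
          simp [Real.cos_neg, Real.sin_neg]
          ring
        rw [hlin, mul_pow, ← Complex.exp_nat_mul]
        rw [show ((m : ℂ) * θ * Complex.I) = (nn : ℂ) * (-θ * Complex.I) by
          rw [hmn]; push_cast; ring]
        rw [← pow_mul, show ((r : ℂ)) ^ k = (r : ℂ) ^ (2 * j) * (r : ℂ) ^ nn by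
          rw [← pow_add, hjk]]
        ring
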